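/- Let S be a ring graded by a group G with R = S_e. Then S is epsilon-strongly graded by G if and only if for every g ∈ G there is an element ε_g ∈ S_g S_{g⁻¹} such that for all s ∈ S_g, ε_g s = s = s ε_{g⁻¹}. -/
import Mathlib

open Pointwise

variable {S : Type*} [Ring S] {ι : Type*} [AddGroup ι]

/-- `I` is a unital ideal of the principal component `𝒜 0`. -/
def IsUnitalIdealOfZero (𝒜 : ι → AddSubgroup S) (I : AddSubgroup S) : Prop :=
  I ≤ 𝒜 0 ∧ (∀ r ∈ 𝒜 0, ∀ x ∈ I, r * x ∈ I ∧ x * r ∈ I) ∧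
    ∃ e ∈ I, ∀ x ∈ I, e * x = x ∧ x * e = x

/-- `S` is epsilon-strongly graded by the (additively written) group `ι`:
for each `g`, `𝒜 g * 𝒜 (-g)` is a unital ideal of `𝒜 0` and
`𝒜 g * 𝒜 h = (𝒜 g * 𝒜 (-g)) * 𝒜 (g+h) = 𝒜 (g+h) * (𝒜 (-h) * 𝒜 h)`. -/
def IsEpsilonStronglyGraded (𝒜 : ι → AddSubgroup S) : Prop :=
  (∀ g : ι, IsUnitalIdealOfZero 𝒜 (𝒜 g * 𝒜 (-g))) ∧
    ∀ g h : ι, 𝒜 g * 𝒜 h = (𝒜 g * 𝒜 (-g)) * 𝒜 (g + h) ∧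
      𝒜 g * 𝒜 h = 𝒜 (g + h) * (𝒜 (-h) * 𝒜 h)

private theorem AG.mul_mem_mul {M N : AddSubgroup S} {m n : S} (hm : m ∈ M) (hn : n ∈ N) :
    m * n ∈ M * N :=
  AddSubmonoid.mul_mem_mul hm hn

private theorem AG.mul_le {M N P : AddSubgroup S} (h : ∀ m ∈ M, ∀ n ∈ N, m * n ∈ P) :
    M * N ≤ P := fun _x hx =>
  AddSubmonoid.mul_induction_on hx h fun _ _ ha hb => P.add_mem ha hb

private theorem AG.mul_induction_on {M N : AddSubgroup S} {C : S → Prop} {r : S}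
    (hr : r ∈ M * N) (hm : ∀ m ∈ M, ∀ n ∈ N, C (m * n))
    (ha : ∀ x y, C x → C y → C (x + y)) : C r :=
  AddSubmonoid.mul_induction_on hr hm ha

private theorem grade_mul_le [DecidableEq ι] (𝒜 : ι → AddSubgroup S) [GradedRing 𝒜] (g h : ι) :
    𝒜 g * 𝒜 h ≤ 𝒜 (g + h) :=
  AG.mul_le fun _a ha _b hb => SetLike.mul_mem_graded ha hb

/-- `S` is epsilon-strongly graded iff for every `g` there is `ε g ∈ S_g S_{g⁻¹}`
such that `ε g * s = s = s * ε (-g)` for all `s ∈ S_g`. -/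
theorem isEpsilonStronglyGraded_iff_exists_epsilon [DecidableEq ι]
    (𝒜 : ι → AddSubgroup S) [GradedRing 𝒜] :
    IsEpsilonStronglyGraded 𝒜 ↔
      ∃ ε : ι → S, ∀ g : ι, ε g ∈ 𝒜 g * 𝒜 (-g) ∧
        ∀ s ∈ 𝒜 g, ε g * s = s ∧ s * ε (-g) = s := by
  constructor
  · rintro ⟨hunital, heq⟩
    choose e he hid using fun g => (hunital g).2.2
    refine ⟨e, fun g => ⟨he g, fun s hs => ?_⟩⟩
    constructor
    · -- s ∈ (𝒜 g * 𝒜 (-g)) * 𝒜 g, then e g is a left identity on the first factor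
      have hs' : s ∈ (𝒜 g * 𝒜 (-g)) * 𝒜 (g + 0) := by
        rw [← (heq g 0).1]
        simpa using AG.mul_mem_mul hs (SetLike.one_mem_graded 𝒜)
      refine AG.mul_induction_on (C := fun t => e g * t = t) hs'
        (fun a ha b _ => ?_) (fun x y hx hy => ?_)
      · beta_reduce at *; rw [← mul_assoc, (hid g a ha).1]
      · beta_reduce at *; rw [mul_add, hx, hy]
    · -- s ∈ 𝒜 (0+g) * (𝒜 (-g) * 𝒜 g), then e (-g) is a right identity on the second factor
      have hs' : s ∈ 𝒜 (0 + g) * (𝒜 (-g) * 𝒜 g) := by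
        rw [← (heq 0 g).2]
        simpa using AG.mul_mem_mul (SetLike.one_mem_graded 𝒜) hs
      refine AG.mul_induction_on (C := fun t => t * e (-g) = t) hs'
        (fun a _ b hb => ?_) (fun x y hx hy => ?_)
      · have hb' : b ∈ 𝒜 (-g) * 𝒜 (- -g) := by simpa using hb
        beta_reduce; rw [mul_assoc, (hid (-g) b hb').2]
      · beta_reduce at *; rw [add_mul, hx, hy]
  · rintro ⟨ε, hε⟩
    constructor
    · intro g
      refine ⟨?_, ?_, ε g, (hε g).1, fun x hx => ?_⟩
      · simpa using grade_mul_le 𝒜 g (-g)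
      · intro r hr x hx
        constructor
        · refine AG.mul_induction_on (C := fun t => r * t ∈ 𝒜 g * 𝒜 (-g)) hx
            (fun a ha b hb => ?_) (fun a b ha hb => ?_)
          · beta_reduce at *; rw [← mul_assoc]
            exact AG.mul_mem_mul (by simpa using SetLike.mul_mem_graded hr ha) hb
          · beta_reduce at *; rw [mul_add]; exact (𝒜 g * 𝒜 (-g)).add_mem ha hb
        · refine AG.mul_induction_on (C := fun t => t * r ∈ 𝒜 g * 𝒜 (-g)) hx
            (fun a ha b hb => ?_) (fun a b ha hb => ?_)
          · beta_reduce at *; rw [mul_assoc]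
            exact AG.mul_mem_mul ha (by simpa using SetLike.mul_mem_graded hb hr)
          · beta_reduce at *; rw [add_mul]; exact (𝒜 g * 𝒜 (-g)).add_mem ha hb
      · refine AG.mul_induction_on (C := fun t => ε g * t = t ∧ t * ε g = t) hx
          (fun a ha b hb => ?_) (fun a b ha hb => ?_)
        · have h1 := ((hε g).2 a ha).1
          have h2 := ((hε (-g)).2 b hb).2
          rw [neg_neg] at h2
          constructor
          · beta_reduce at *; rw [← mul_assoc, h1]
          · beta_reduce at *; rw [mul_assoc, h2]
        · constructor
          · beta_reduce at *; rw [mul_add, ha.1, hb.1]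
          · beta_reduce at *; rw [add_mul, ha.2, hb.2]
    · intro g h
      constructor
      · apply le_antisymm
        · refine AG.mul_le fun a ha b hb => ?_
          have h1 := ((hε g).2 a ha).1
          rw [← h1, mul_assoc]
          exact AG.mul_mem_mul (hε g).1 (SetLike.mul_mem_graded ha hb)
        · refine AG.mul_le fun x hx c hc => ?_
          refine AG.mul_induction_on (C := fun t => t * c ∈ 𝒜 g * 𝒜 h) hx
            (fun a ha b hb => ?_) (fun p q hp hq => ?_)
          · beta_reduce at *; rw [mul_assoc]
            refine AG.mul_mem_mul ha ?_
            have : b * c ∈ 𝒜 (-g + (g + h)) := SetLike.mul_mem_graded hb hc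
            simpa using this
          · beta_reduce at *; rw [add_mul]; exact (𝒜 g * 𝒜 h).add_mem hp hq
      · apply le_antisymm
        · refine AG.mul_le fun a ha b hb => ?_
          have h2 := ((hε h).2 b hb).2
          have hεh : ε (-h) ∈ 𝒜 (-h) * 𝒜 h := by simpa using (hε (-h)).1
          rw [← h2, ← mul_assoc]
          exact AG.mul_mem_mul (SetLike.mul_mem_graded ha hb) hεh
        · refine AG.mul_le fun c hc x hx => ?_
          refine AG.mul_induction_on (C := fun t => c * t ∈ 𝒜 g * 𝒜 h) hx
            (fun a ha b hb => ?_) (fun p q hp hq => ?_)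
          · beta_reduce at *; rw [← mul_assoc]
            refine AG.mul_mem_mul ?_ hb
            have : c * a ∈ 𝒜 (g + h + -h) := SetLike.mul_mem_graded hc ha
            simpa using this
          · beta_reduce at *; rw [mul_add]; exact (𝒜 g * 𝒜 h).add_mem hp hq
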